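/- Let (H →∂ G, ▷) be a crossed module. Let g₁₂, g₁₃, g₁₅, g₂₃, g₂₅, g₃₅ ∈ G and h₁₂₃, h₁₂₅, h₁₃₅, h₂₃₅ ∈ H. Assume: (1) g₃₅ = ∂(h₁₃₅)⁻¹ g₁₅ g₁₃⁻¹ (flatness of face 135); (2) h₂₃₅ = h₁₂₅⁻¹ h₁₃₅ (g₃₅ ▷ h₁₂₃) (flatness of tetrahedron 1235); (3) g₁₃ = ∂(h₁₂₃) g₂₃ g₁₂ (flatness of face 123); (4) g₂₅ = ∂(h₁₂₅)⁻¹ g₁₅ g₁₂⁻¹ (flatness of face 125). Then ∂(h₂₃₅) g₃₅ g₂₃ g₂₅⁻¹ = 1 (flatness of face 235). -/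
import Mathlib

/-- A crossed module `(H --∂--> G, ▷)`: groups `G`, `H`, a group homomorphism
`δ : H →* G`, and a left action of `G` on `H` in which every `g : G` acts as a
group automorphism of `H` (encoded as `act : G →* MulAut H`), satisfying the
equivariance axiom and the Peiffer identity. -/
structure CrossedModule (G H : Type*) [Group G] [Group H] where
  δ : H →* G
  act : G →* MulAut H
  equivariance : ∀ (g : G) (h : H), δ (act g h) = g * δ h * g⁻¹
  peiffer : ∀ (h h' : H), act (δ h) h' = h * h' * h⁻¹

/-- Flatness of faces 135, 123, 125 and of tetrahedron 1235 implies flatness of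
face 235. -/
theorem face235_flat {G H : Type*} [Group G] [Group H] (X : CrossedModule G H)
    (g₁₂ g₁₃ g₁₅ g₂₃ g₂₅ g₃₅ : G) (h₁₂₃ h₁₂₅ h₁₃₅ h₂₃₅ : H)
    (h1 : g₃₅ = (X.δ h₁₃₅)⁻¹ * g₁₅ * g₁₃⁻¹)
    (h2 : h₂₃₅ = h₁₂₅⁻¹ * h₁₃₅ * X.act g₃₅ h₁₂₃)
    (h3 : g₁₃ = X.δ h₁₂₃ * g₂₃ * g₁₂)
    (h4 : g₂₅ = (X.δ h₁₂₅)⁻¹ * g₁₅ * g₁₂⁻¹) :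
    X.δ h₂₃₅ * g₃₅ * g₂₃ * g₂₅⁻¹ = 1 := by
  rw [h2, map_mul, map_mul, map_inv, X.equivariance, h1, h3, h4]
  group
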